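/- Let 0 < q < 1. There is no T > 0 and no continuously differentiable function x : [0, T] → ℝ with x(0) = 0 such that the Caputo fractional derivative satisfies D_*^q x(t) = 2 − 3·sign(x(t)) for all t ∈ (0, T]. In particular, the discontinuous fractional initial value problem D_*^q x = 2 − 3·sign(x), x(0) = 0, has no classical solution. -/

import Mathlib

open Set intervalIntegral

/-- The discontinuous fractional IVP `D_*^q x = 2 - 3·sign(x)`, `x(0) = 0`, has no
classical (continuously differentiable) solution on any interval `[0, T]`, `T > 0`.
Here `x'` denotes the (continuous) derivative of `x` on `[0, T]` and the Caputo
derivative is `(1/Γ(1-q)) ∫_0^t (t-τ)^(-q) x'(τ) dτ`. -/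
theorem no_classical_solution_from_zero (q : ℝ) (hq0 : 0 < q) (hq1 : q < 1) :
    ¬ ∃ (T : ℝ) (_ : 0 < T) (x x' : ℝ → ℝ),
        x 0 = 0 ∧
        (∀ t ∈ Set.Icc (0 : ℝ) T, HasDerivWithinAt x (x' t) (Set.Icc (0 : ℝ) T) t) ∧
        ContinuousOn x' (Set.Icc (0 : ℝ) T) ∧
        ∀ t ∈ Set.Ioc (0 : ℝ) T,
          (1 / Real.Gamma (1 - q)) * ∫ τ in (0 : ℝ)..t, (t - τ) ^ (-q) * x' τ
            = 2 - 3 * Real.sign (x t) := by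
  rintro ⟨T, hT, x, x', hx0, hderiv, hcont, heq⟩
  have hp : (0 : ℝ) < 1 - q := by linarith
  have hΓ : 0 < Real.Gamma (1 - q) := Real.Gamma_pos_of_pos hp
  -- bound on x'
  obtain ⟨M, hM⟩ : ∃ M, ∀ τ ∈ Set.Icc (0:ℝ) T, ‖x' τ‖ ≤ M :=
    isCompact_Icc.exists_bound_of_continuousOn hcont
  have hM0 : 0 ≤ M := le_trans (norm_nonneg _) (hM 0 ⟨le_refl _, hT.le⟩)
  set C : ℝ := M / ((1 - q) * Real.Gamma (1 - q)) with hC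
  have hC0 : 0 ≤ C := div_nonneg hM0 (by positivity)
  -- key bound
  have key : ∀ t ∈ Set.Ioc (0:ℝ) T,
      |(1 / Real.Gamma (1 - q)) * ∫ τ in (0 : ℝ)..t, (t - τ) ^ (-q) * x' τ|
        ≤ C * t ^ (1 - q) := by
    intro t ht
    have ht0 : 0 < t := ht.1
    have hsub : Set.uIcc (0:ℝ) t ⊆ Set.Icc 0 T := by
      rw [Set.uIcc_of_le ht0.le]
      exact Set.Icc_subset_Icc le_rfl ht.2
    have hg : IntervalIntegrable (fun τ => (t - τ) ^ (-q)) MeasureTheory.volume 0 t := by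
      have h1 : IntervalIntegrable (fun s : ℝ => s ^ (-q)) MeasureTheory.volume 0 t :=
        intervalIntegral.intervalIntegrable_rpow' (by linarith)
      simpa using (h1.comp_sub_left t).symm
    have hf : IntervalIntegrable (fun τ => (t - τ) ^ (-q) * x' τ) MeasureTheory.volume 0 t :=
      hg.mul_continuousOn (hcont.mono hsub)
    have habs : |∫ τ in (0:ℝ)..t, (t - τ) ^ (-q) * x' τ|
        ≤ ∫ τ in (0:ℝ)..t, |(t - τ) ^ (-q) * x' τ| :=
      intervalIntegral.abs_integral_le_integral_abs ht0.le
    have hmono : (∫ τ in (0:ℝ)..t, |(t - τ) ^ (-q) * x' τ|)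
        ≤ ∫ τ in (0:ℝ)..t, (t - τ) ^ (-q) * M := by
      apply intervalIntegral.integral_mono_on ht0.le hf.abs (hg.mul_const M)
      intro τ hτ
      have h1 : (0:ℝ) ≤ (t - τ) ^ (-q) := Real.rpow_nonneg (by linarith [hτ.2]) _
      rw [abs_mul, abs_of_nonneg h1]
      exact mul_le_mul_of_nonneg_left
        (by simpa using hM τ ⟨hτ.1, le_trans hτ.2 ht.2⟩) h1
    have hval : (∫ τ in (0:ℝ)..t, (t - τ) ^ (-q)) = t ^ (1 - q) / (1 - q) := by
      have := intervalIntegral.integral_comp_sub_left (fun s : ℝ => s ^ (-q)) t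
        (a := 0) (b := t)
      rw [this]
      simp only [sub_self, sub_zero]
      rw [integral_rpow (Or.inl (by linarith))]
      rw [show (-q + 1 : ℝ) = 1 - q from by ring, Real.zero_rpow hp.ne', sub_zero]
    have hint : (∫ τ in (0:ℝ)..t, (t - τ) ^ (-q) * M) = M * (t ^ (1 - q) / (1 - q)) := by
      rw [intervalIntegral.integral_mul_const, hval, mul_comm]
    calc |(1 / Real.Gamma (1 - q)) * ∫ τ in (0 : ℝ)..t, (t - τ) ^ (-q) * x' τ|
        = (1 / Real.Gamma (1 - q)) * |∫ τ in (0 : ℝ)..t, (t - τ) ^ (-q) * x' τ| := by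
          rw [abs_mul, abs_of_nonneg (by positivity)]
      _ ≤ (1 / Real.Gamma (1 - q)) * (M * (t ^ (1 - q) / (1 - q))) := by
          apply mul_le_mul_of_nonneg_left _ (by positivity)
          rw [← hint]
          exact habs.trans hmono
      _ = C * t ^ (1 - q) := by
          rw [hC]; field_simp
  -- choose small t
  set δ : ℝ := (1 / (C + 1)) ^ (1 - q)⁻¹ with hδ
  have hδ0 : 0 < δ := Real.rpow_pos_of_pos (by positivity) _
  set t : ℝ := min T δ with htdef
  have ht0 : 0 < t := lt_min hT hδ0
  have htT : t ∈ Set.Ioc (0:ℝ) T := ⟨ht0, min_le_left _ _⟩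
  have htp : t ^ (1 - q) ≤ 1 / (C + 1) := by
    have h1 : t ^ (1 - q) ≤ δ ^ (1 - q) :=
      Real.rpow_le_rpow ht0.le (min_le_right _ _) hp.le
    have h2 : δ ^ (1 - q) = 1 / (C + 1) := by
      rw [hδ, ← Real.rpow_mul (by positivity), inv_mul_cancel₀ hp.ne', Real.rpow_one]
    rwa [h2] at h1
  have hsmall : |(1 / Real.Gamma (1 - q)) * ∫ τ in (0 : ℝ)..t, (t - τ) ^ (-q) * x' τ| < 1 := by
    calc |(1 / Real.Gamma (1 - q)) * ∫ τ in (0 : ℝ)..t, (t - τ) ^ (-q) * x' τ|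
        ≤ C * t ^ (1 - q) := key t htT
      _ ≤ C * (1 / (C + 1)) := mul_le_mul_of_nonneg_left htp hC0
      _ < 1 := by rw [mul_one_div, div_lt_one (by positivity)]; linarith
  rw [heq t htT] at hsmall
  have hbig : (1:ℝ) ≤ |2 - 3 * Real.sign (x t)| := by
    rcases lt_trichotomy (x t) 0 with h | h | h
    · rw [Real.sign_of_neg h]; norm_num
    · rw [h, Real.sign_zero]; norm_num
    · rw [Real.sign_of_pos h]; norm_num
  linarith
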